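/- Let c ∈ (0,1), ε > 0, α > 0, β > 0. Then the fixed-point equation e = (1 + cα/(1 + α e) + c β ε/(1 + β ε e))^{-1} has a unique nonnegative real solution e, and this solution satisfies e > 0. -/

import Mathlib

/-- The fixed-point equation `e = (1 + cα/(1+αe) + cβε/(1+βεe))⁻¹` has a unique
nonnegative real solution, and this solution is positive. -/
theorem fixed_point_unique_positive {c ε α β : ℝ}
    (hc0 : 0 < c) (hc1 : c < 1) (hε : 0 < ε) (hα : 0 < α) (hβ : 0 < β) :
    (∃! e : ℝ, 0 ≤ e ∧
        e = (1 + c * α / (1 + α * e) + c * β * ε / (1 + β * ε * e))⁻¹) ∧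
    ∀ e : ℝ, 0 ≤ e →
      e = (1 + c * α / (1 + α * e) + c * β * ε / (1 + β * ε * e))⁻¹ → 0 < e := by
  set h : ℝ → ℝ :=
    fun e => e + c * α * e / (1 + α * e) + c * β * ε * e / (1 + β * ε * e) with hh
  have hd1 : ∀ e : ℝ, 0 ≤ e → (0:ℝ) < 1 + α * e := by intro e he; nlinarith
  have hd2 : ∀ e : ℝ, 0 ≤ e → (0:ℝ) < 1 + β * ε * e := by
    intro e he; nlinarith [mul_nonneg (mul_pos hβ hε).le he]
  have hS : ∀ e : ℝ, 0 ≤ e →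
      0 < 1 + c * α / (1 + α * e) + c * β * ε / (1 + β * ε * e) := by
    intro e he
    have h1 := hd1 e he; have h2 := hd2 e he
    positivity
  have key : ∀ e : ℝ, 0 ≤ e →
      (e = (1 + c * α / (1 + α * e) + c * β * ε / (1 + β * ε * e))⁻¹ ↔ h e = 1) := by
    intro e he
    have h1 := hd1 e he; have h2 := hd2 e he; have h3 := hS e he
    have hE : h e = e * (1 + c * α / (1 + α * e) + c * β * ε / (1 + β * ε * e)) := by
      simp only [hh]; field_simp
    constructor
    · intro he2
      rw [hE]
      nth_rewrite 1 [he2]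
      exact inv_mul_cancel₀ h3.ne'
    · intro he2
      rw [hE] at he2
      exact eq_inv_of_mul_eq_one_left he2
  have mono : ∀ x y : ℝ, 0 ≤ x → 0 ≤ y → x < y → h x < h y := by
    intro x y hx hy hxy
    have h1x := hd1 x hx; have h1y := hd1 y hy
    have h2x := hd2 x hx; have h2y := hd2 y hy
    have A : c * α * x / (1 + α * x) ≤ c * α * y / (1 + α * y) := by
      rw [div_le_div_iff₀ h1x h1y]
      nlinarith [mul_pos (mul_pos hc0 hα) (sub_pos.mpr hxy)]
    have B : c * β * ε * x / (1 + β * ε * x) ≤ c * β * ε * y / (1 + β * ε * y) := by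
      rw [div_le_div_iff₀ h2x h2y]
      nlinarith [mul_pos (mul_pos (mul_pos hc0 hβ) hε) (sub_pos.mpr hxy)]
    simp only [hh]; linarith
  have hpos : ∀ e : ℝ, 0 ≤ e →
      e = (1 + c * α / (1 + α * e) + c * β * ε / (1 + β * ε * e))⁻¹ → 0 < e := by
    intro e he heq
    have h1 : h e = 1 := (key e he).mp heq
    rcases he.eq_or_lt with rfl | hlt
    · simp [hh] at h1
    · exact hlt
  -- continuity
  have hcont : ContinuousOn h (Set.Icc 0 1) := by
    apply ContinuousOn.add
    apply ContinuousOn.add continuousOn_id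
    · exact ContinuousOn.div (by fun_prop) (by fun_prop)
        (fun x hx => (hd1 x hx.1).ne')
    · exact ContinuousOn.div (by fun_prop) (by fun_prop)
        (fun x hx => (hd2 x hx.1).ne')
  have h0 : h 0 = 0 := by simp [hh]
  have h1v : 1 ≤ h 1 := by
    have h1 := hd1 1 zero_le_one; have h2 := hd2 1 zero_le_one
    have A : 0 ≤ c * α * 1 / (1 + α * 1) := by positivity
    have B : 0 ≤ c * β * ε * 1 / (1 + β * ε * 1) := by positivity
    simp only [hh]; linarith
  obtain ⟨e, heI, hee⟩ := intermediate_value_Icc (by norm_num : (0:ℝ) ≤ 1) hcont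
    (by rw [h0]; exact ⟨zero_le_one, h1v⟩ : (1:ℝ) ∈ Set.Icc (h 0) (h 1))
  refine ⟨⟨e, ⟨heI.1, (key e heI.1).mpr hee⟩, ?_⟩, hpos⟩
  rintro y ⟨hy0, hyeq⟩
  have hy1 : h y = 1 := (key y hy0).mp hyeq
  rcases lt_trichotomy y e with hlt | heq | hgt
  · have := mono y e hy0 heI.1 hlt; rw [hy1, hee] at this; linarith
  · exact heq
  · have := mono e y heI.1 hy0 hgt; rw [hy1, hee] at this; linarith
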